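/- Uniform-smoothing gradient approximation: if f_β is differentiable at x ∈ ℝ^d with gradient ∇f_β(x), then ‖∇f_β(x) − ∇f(x)‖ ≤ β L d / 2. -/

import Mathlib

open MeasureTheory

/-- The uniform probability measure (normalized Lebesgue measure) on the closed unit
ball of `ℝ^d`. -/
noncomputable def uniformUnitBall (d : ℕ) : Measure (EuclideanSpace ℝ (Fin d)) :=
  (volume (Metric.closedBall (0 : EuclideanSpace ℝ (Fin d)) 1))⁻¹ •
    volume.restrict (Metric.closedBall (0 : EuclideanSpace ℝ (Fin d)) 1)

open Metric Set InnerProductSpace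
open scoped RealInnerProductSpace

section Aux

variable {E : Type*} [NormedAddCommGroup E] [InnerProductSpace ℝ E] [CompleteSpace E]

lemma usga_fderiv_eq_toDual_gradient (f : E → ℝ) (y : E) :
    fderiv ℝ f y = toDual ℝ E (gradient f y) := by
  rw [gradient, (toDual ℝ E).apply_symm_apply]

lemma usga_fderiv_apply_eq_inner (f : E → ℝ) (y v : E) :
    fderiv ℝ f y v = ⟪gradient f y, v⟫ := by
  rw [usga_fderiv_eq_toDual_gradient, toDual_apply_apply]

lemma usga_quad_bound {f : E → ℝ} {L : ℝ} (hL0 : 0 ≤ L)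
    (hdiff : Differentiable ℝ f)
    (hLip : ∀ u v, ‖gradient f u - gradient f v‖ ≤ L * ‖u - v‖)
    (y z : E) :
    |f z - f y - ⟪gradient f y, z - y⟫| ≤ L * ‖z - y‖ * ‖z - y‖ := by
  have key := Convex.norm_image_sub_le_of_norm_hasFDerivWithin_le'
    (f := f) (f' := fun w => fderiv ℝ f w) (φ := fderiv ℝ f y)
    (s := Metric.closedBall y ‖z - y‖) (C := L * ‖z - y‖)
    (fun w _ => (hdiff w).hasFDerivAt.hasFDerivWithinAt)
    (fun w hw => by
      have h1 : ‖fderiv ℝ f w - fderiv ℝ f y‖ = ‖gradient f w - gradient f y‖ := by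
        rw [usga_fderiv_eq_toDual_gradient, usga_fderiv_eq_toDual_gradient, ← map_sub,
          LinearIsometryEquiv.norm_map]
      rw [h1]
      calc ‖gradient f w - gradient f y‖ ≤ L * ‖w - y‖ := hLip w y
        _ ≤ L * ‖z - y‖ := by
            have := Metric.mem_closedBall.mp hw
            rw [dist_eq_norm] at this
            nlinarith [norm_nonneg (w - y)])
    (convex_closedBall y ‖z - y‖)
    (Metric.mem_closedBall_self (norm_nonneg _))
    (by rw [Metric.mem_closedBall, dist_eq_norm])
  rw [usga_fderiv_apply_eq_inner] at key
  calc |f z - f y - ⟪gradient f y, z - y⟫| = ‖f z - f y - ⟪gradient f y, z - y⟫‖ := rfl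
    _ ≤ L * ‖z - y‖ * ‖z - y‖ := key

end Aux

section Meas

variable (d : ℕ)

lemma usga_volB_pos : 0 < volume (closedBall (0 : EuclideanSpace ℝ (Fin d)) 1) :=
  measure_closedBall_pos volume _ one_pos

lemma usga_volB_lt_top : volume (closedBall (0 : EuclideanSpace ℝ (Fin d)) 1) < ⊤ :=
  (isCompact_closedBall _ _).measure_lt_top

instance : IsProbabilityMeasure (uniformUnitBall d) := by
  constructor
  rw [uniformUnitBall, Measure.smul_apply, Measure.restrict_apply MeasurableSet.univ,
    Set.univ_inter, smul_eq_mul]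
  exact ENNReal.inv_mul_cancel (usga_volB_pos d).ne' (usga_volB_lt_top d).ne

lemma usga_integrable_of_continuous {g : EuclideanSpace ℝ (Fin d) → ℝ} (hg : Continuous g) :
    Integrable g (uniformUnitBall d) := by
  rw [uniformUnitBall]
  exact (hg.continuousOn.integrableOn_compact (isCompact_closedBall _ _)).smul_measure
    (ENNReal.inv_ne_top.mpr (usga_volB_pos d).ne')

lemma usga_integral_norm (hd : 1 ≤ d) :
    ∫ u, ‖u‖ ∂(uniformUnitBall d) = d / (d + 1) := by
  haveI : Nontrivial (EuclideanSpace ℝ (Fin d)) := by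
    have : 0 < Module.finrank ℝ (EuclideanSpace ℝ (Fin d)) := by
      rw [finrank_euclideanSpace_fin]; exact hd
    exact Module.nontrivial_of_finrank_pos this
  set B := closedBall (0 : EuclideanSpace ℝ (Fin d)) 1 with hB
  have hφ : ∀ x : EuclideanSpace ℝ (Fin d),
      (Set.Ioc (0:ℝ) 1).indicator id ‖x‖ = B.indicator (fun u => ‖u‖) x := by
    intro x
    rcases le_or_gt ‖x‖ 1 with h1 | h1
    · rcases (norm_nonneg x).eq_or_lt with h0 | h0
      · simp [Set.indicator_apply, Set.mem_Ioc, ← h0, hB, mem_closedBall, dist_zero_right, h1]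
      · simp [Set.indicator_apply, Set.mem_Ioc, h0, h1, hB, mem_closedBall, dist_zero_right]
    · simp [Set.indicator_apply, Set.mem_Ioc, h1.not_ge, hB, mem_closedBall, dist_zero_right]
  have hball : ∫ u in B, ‖u‖ ∂volume
      = (d : ℝ) * (volume B).toReal * (1 / (d + 1)) := by
    have h1 : ∫ u in B, ‖u‖ ∂volume
        = ∫ x : EuclideanSpace ℝ (Fin d), (Set.Ioc (0:ℝ) 1).indicator id ‖x‖ ∂volume := by
      rw [← integral_indicator (hB ▸ (isClosed_closedBall).measurableSet)]
      exact (integral_congr_ae (Filter.Eventually.of_forall hφ)).symm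
    rw [h1, integral_fun_norm_addHaar volume ((Set.Ioc (0:ℝ) 1).indicator id)]
    have hdim : Module.finrank ℝ (EuclideanSpace ℝ (Fin d)) = d := finrank_euclideanSpace_fin
    rw [hdim]
    have h2 : ∫ y in Set.Ioi (0:ℝ), y ^ (d - 1) • (Set.Ioc (0:ℝ) 1).indicator id y
        = 1 / (d + 1) := by
      have heq : ∀ y ∈ Set.Ioi (0:ℝ), y ^ (d-1) • (Set.Ioc (0:ℝ) 1).indicator id y
          = (Set.Ioc (0:ℝ) 1).indicator (fun y => y ^ d) y := by
        intro y hy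
        by_cases hmem : y ∈ Set.Ioc (0:ℝ) 1
        · rw [Set.indicator_of_mem hmem, Set.indicator_of_mem hmem, id, smul_eq_mul,
            ← pow_succ, Nat.sub_add_cancel hd]
        · rw [Set.indicator_of_notMem hmem, Set.indicator_of_notMem hmem, smul_zero]
      rw [setIntegral_congr_fun measurableSet_Ioi heq,
        setIntegral_indicator measurableSet_Ioc,
        Set.inter_eq_self_of_subset_right Set.Ioc_subset_Ioi_self,
        ← intervalIntegral.integral_of_le zero_le_one, integral_pow]
      simp
    rw [h2, hB, Measure.addHaar_closedBall_eq_addHaar_ball]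
    simp [smul_eq_mul]
    rw [measureReal_def]; ring
  rw [uniformUnitBall, integral_smul_measure, ← hB, smul_eq_mul, hball, ENNReal.toReal_inv]
  have hne : (volume B).toReal ≠ 0 :=
    ENNReal.toReal_ne_zero.mpr ⟨(usga_volB_pos d).ne', (usga_volB_lt_top d).ne⟩
  field_simp

end Meas

/-- Uniform-smoothing gradient approximation: if the smoothed function
`f_β(x) = E_{u ~ Unif(B)}[f(x + βu)]` has gradient `g` at `x`, then
`‖g − ∇f(x)‖ ≤ β L d / 2`. -/
theorem uniform_smoothing_gradient_approx
    (d : ℕ) (hd : 1 ≤ d)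
    (f : EuclideanSpace ℝ (Fin d) → ℝ)
    (L : ℝ) (hL : 0 < L)
    (hdiff : Differentiable ℝ f)
    (hLip : ∀ u v, ‖gradient f u - gradient f v‖ ≤ L * ‖u - v‖)
    (β : ℝ) (hβ : 0 < β)
    (x g : EuclideanSpace ℝ (Fin d))
    (hg : HasGradientAt (fun y => ∫ u, f (y + β • u) ∂(uniformUnitBall d)) g x) :
    ‖g - gradient f x‖ ≤ β * L * d / 2 := by
  classical
  set μ := uniformUnitBall d with hμ
  set G := gradient f x with hG
  set w := g - G with hw
  by_cases hw0 : w = 0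
  · rw [hw0, norm_zero]
    positivity
  have hL0 : 0 ≤ L := hL.le
  set v := ‖w‖⁻¹ • w with hv
  have hwne : ‖w‖ ≠ 0 := norm_ne_zero_iff.mpr hw0
  have hnv : ‖v‖ = 1 := by
    rw [hv, norm_smul, norm_inv, norm_norm, inv_mul_cancel₀ hwne]
  set F : EuclideanSpace ℝ (Fin d) → ℝ := fun y => ∫ u, f (y + β • u) ∂μ with hF
  set I : ℝ := ∫ u, ‖u‖ ∂μ with hI
  have hIval : I = d / (d + 1) := usga_integral_norm d hd
  -- integrability
  have hcont : ∀ z : EuclideanSpace ℝ (Fin d), Integrable (fun u => f (z + β • u)) μ := by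
    intro z
    exact usga_integrable_of_continuous d
      (hdiff.continuous.comp (continuous_const.add (continuous_id.const_smul β)))
  have hnormint : Integrable (fun u : EuclideanSpace ℝ (Fin d) => ‖u‖) μ :=
    usga_integrable_of_continuous d continuous_norm
  -- Step A
  have keyA : ∀ t : ℝ, |F (x + t • v) - F x - t * ⟪G, v⟫| ≤ L * t ^ 2 + |t| * (L * β * I) := by
    intro t
    have hint1 : Integrable (fun u => f (x + t • v + β • u)) μ := hcont (x + t • v)
    have hint2 : Integrable (fun u => f (x + β • u)) μ := hcont x
    have heq : (∫ u, (f (x + t • v + β • u) - f (x + β • u) - t * ⟪G, v⟫) ∂μ)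
        = F (x + t • v) - F x - t * ⟪G, v⟫ := by
      have e2 := integral_sub (hint1.sub hint2) (integrable_const (μ := μ) (t * ⟪G, v⟫))
      simp only [Pi.sub_apply] at e2
      have e1 := integral_sub hint1 hint2
      rw [e2, e1, integral_const, probReal_univ, one_smul]
    have hpt : ∀ u : EuclideanSpace ℝ (Fin d),
        ‖f (x + t • v + β • u) - f (x + β • u) - t * ⟪G, v⟫‖
          ≤ L * t ^ 2 + (|t| * (L * β)) * ‖u‖ := by
      intro u
      set y := x + β • u with hy
      have hxy : x + t • v + β • u = y + t • v := by rw [hy]; abel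
      have h1 := usga_quad_bound hL0 hdiff hLip y (y + t • v)
      rw [add_sub_cancel_left] at h1
      have hnt : ‖t • v‖ = |t| := by rw [norm_smul, hnv, mul_one, Real.norm_eq_abs]
      rw [hnt] at h1
      have h1' : |f (y + t • v) - f y - t * ⟪gradient f y, v⟫| ≤ L * t ^ 2 := by
        rw [real_inner_smul_right] at h1
        calc |f (y + t • v) - f y - t * ⟪gradient f y, v⟫| ≤ L * |t| * |t| := h1
          _ = L * t ^ 2 := by rw [mul_assoc, abs_mul_abs_self, sq]
      have h2 : |t * ⟪gradient f y, v⟫ - t * ⟪G, v⟫| ≤ |t| * (L * β) * ‖u‖ := by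
        have : t * ⟪gradient f y, v⟫ - t * ⟪G, v⟫ = t * ⟪gradient f y - G, v⟫ := by
          rw [inner_sub_left]; ring
        rw [this, abs_mul]
        have hyx : y - x = β • u := by rw [hy]; abel
        have hgb : ‖gradient f y - G‖ ≤ L * β * ‖u‖ := by
          calc ‖gradient f y - G‖ ≤ L * ‖y - x‖ := hLip y x
            _ = L * β * ‖u‖ := by
                rw [hyx, norm_smul, Real.norm_eq_abs, abs_of_pos hβ, mul_assoc]
        have hib : |⟪gradient f y - G, v⟫| ≤ L * β * ‖u‖ := by
          calc |⟪gradient f y - G, v⟫| ≤ ‖gradient f y - G‖ * ‖v‖ := abs_real_inner_le_norm _ _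
            _ = ‖gradient f y - G‖ := by rw [hnv, mul_one]
            _ ≤ L * β * ‖u‖ := hgb
        calc |t| * |⟪gradient f y - G, v⟫| ≤ |t| * (L * β * ‖u‖) := by
              exact mul_le_mul_of_nonneg_left hib (abs_nonneg t)
          _ = |t| * (L * β) * ‖u‖ := by ring
      rw [hxy, Real.norm_eq_abs]
      calc |f (y + t • v) - f (x + β • u) - t * ⟪G, v⟫|
          = |(f (y + t • v) - f y - t * ⟪gradient f y, v⟫)
              + (t * ⟪gradient f y, v⟫ - t * ⟪G, v⟫)| := by rw [hy]; ring_nf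
        _ ≤ |f (y + t • v) - f y - t * ⟪gradient f y, v⟫|
              + |t * ⟪gradient f y, v⟫ - t * ⟪G, v⟫| := abs_add_le _ _
        _ ≤ L * t ^ 2 + (|t| * (L * β)) * ‖u‖ := add_le_add h1' h2
    have hbound : Integrable (fun u : EuclideanSpace ℝ (Fin d)
        => L * t ^ 2 + (|t| * (L * β)) * ‖u‖) μ :=
      (integrable_const _).add (hnormint.const_mul _)
    calc |F (x + t • v) - F x - t * ⟪G, v⟫|
        = ‖∫ u, (f (x + t • v + β • u) - f (x + β • u) - t * ⟪G, v⟫) ∂μ‖ := by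
          rw [heq, Real.norm_eq_abs]
      _ ≤ ∫ u, (L * t ^ 2 + (|t| * (L * β)) * ‖u‖) ∂μ :=
          norm_integral_le_of_norm_le hbound (Filter.Eventually.of_forall hpt)
      _ = L * t ^ 2 + |t| * (L * β * I) := by
          rw [integral_add (integrable_const _) (hnormint.const_mul _), integral_const,
            probReal_univ, one_smul, integral_const_mul, ← hI]
          ring
  -- Step B : derivative along v
  have hcurve : HasDerivAt (fun t : ℝ => x + t • v) v 0 := by
    simpa using ((hasDerivAt_id (0 : ℝ)).smul_const v).const_add x
  have hgx : HasFDerivAt F (toDual ℝ _ g) ((fun t : ℝ => x + t • v) 0) := by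
    simpa using hg.hasFDerivAt
  have hFd : HasDerivAt (fun t : ℝ => F (x + t • v)) ⟪g, v⟫ 0 := by
    have := hgx.comp_hasDerivAt 0 hcurve
    simpa [Function.comp_def, toDual_apply_apply] using this
  set ψ : ℝ → ℝ := fun t => F (x + t • v) with hψ
  have hψ0 : ψ 0 = F x := by simp [hψ]
  have hslope : Filter.Tendsto (slope ψ 0) (nhdsWithin 0 (Set.Ioi 0)) (nhds ⟪g, v⟫) :=
    (hasDerivAt_iff_tendsto_slope.mp hFd).mono_left
      (nhdsWithin_mono 0 (fun y hy => ne_of_gt hy))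
  -- inner products
  have hwv : ⟪w, v⟫ = ‖w‖ := by
    rw [hv, real_inner_smul_right, real_inner_self_eq_norm_sq]
    field_simp
  have hwgG : ⟪w, v⟫ = ⟪g, v⟫ - ⟪G, v⟫ := by rw [hw, inner_sub_left]
  -- main inequality for t > 0
  have key2 : ∀ t ∈ Set.Ioi (0:ℝ),
      ‖w‖ ≤ L * t + L * β * I + |⟪g, v⟫ - slope ψ 0 t| := by
    intro t ht
    have ht' : (0:ℝ) < t := ht
    have hA := keyA t
    rw [abs_of_pos ht'] at hA
    have hsl : slope ψ 0 t = (ψ t - ψ 0) / t := by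
      rw [slope_def_field, sub_zero]
    have habs1 : ψ t - ψ 0 - t * ⟪G, v⟫ ≤ L * t ^ 2 + t * (L * β * I) := by
      rw [hψ0]
      exact (abs_le.mp hA).2
    have hdiv : slope ψ 0 t - ⟪G, v⟫ ≤ L * t + L * β * I := by
      rw [hsl, div_sub' (ne_of_gt ht'), div_le_iff₀ ht']
      nlinarith
    have habs2 : ⟪g, v⟫ - slope ψ 0 t ≤ |⟪g, v⟫ - slope ψ 0 t| := le_abs_self _
    have : ‖w‖ = (⟪g, v⟫ - slope ψ 0 t) + (slope ψ 0 t - ⟪G, v⟫) := by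
      rw [← hwv, hwgG]; ring
    linarith
  -- pass to the limit
  have htend : Filter.Tendsto (fun t => L * t + L * β * I + |⟪g, v⟫ - slope ψ 0 t|)
      (nhdsWithin 0 (Set.Ioi 0)) (nhds (L * 0 + L * β * I + |⟪g, v⟫ - ⟪g, v⟫|)) := by
    refine Filter.Tendsto.add (Filter.Tendsto.add ?_ tendsto_const_nhds) ?_
    · exact ((continuous_const.mul continuous_id).tendsto 0).mono_left nhdsWithin_le_nhds
    · exact (tendsto_const_nhds.sub hslope).abs
  have hfinal : ‖w‖ ≤ L * 0 + L * β * I + |⟪g, v⟫ - ⟪g, v⟫| := by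
    refine ge_of_tendsto htend ?_
    filter_upwards [self_mem_nhdsWithin] with t ht using key2 t ht
  rw [sub_self, abs_zero, mul_zero, zero_add, add_zero] at hfinal
  -- conclude
  have hdone : ‖w‖ ≤ β * L * d / 2 := by
    rw [hIval] at hfinal
    have hd1 : (1:ℝ) ≤ d := by exact_mod_cast hd
    have h2d : (d:ℝ) / (d + 1) ≤ d / 2 := by
      apply div_le_div_of_nonneg_left (by linarith) (by norm_num) (by linarith)
    calc ‖w‖ ≤ L * β * ((d:ℝ) / (d + 1)) := hfinal
      _ ≤ L * β * ((d:ℝ) / 2) := by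
          exact mul_le_mul_of_nonneg_left h2d (by positivity)
      _ = β * L * d / 2 := by ring
  exact hdone
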